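/- Let p ≥ 3, q ≥ 3, m ≥ 1 be integers with d = gcd(p,q), and suppose k is a positive integer with k' ∣ k where k' is the smallest positive integer satisfying 2p ∣ k'·q·(p−2). If p and q are both odd, then (m·k)/2 ≥ mp/d; if p is even, then m·k ≥ mp/d when q is even or 4 ∣ p, and m·k ≥ mp/(2d) when p ≡ 2 mod 4 and q is odd. -/

import Mathlib

private lemma div_gcd_dvd' {a b j : ℕ} (ha : 0 < a) (h : a ∣ j * b) :
    a / Nat.gcd a b ∣ j := by
  set g := Nat.gcd a b with hgdef
  have hg : 0 < g := Nat.gcd_pos_of_pos_left b ha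
  have hco := Nat.coprime_div_gcd_div_gcd (m := a) (n := b) hg
  apply hco.dvd_of_dvd_mul_right
  obtain ⟨c, hc⟩ := h
  obtain ⟨a', ha'⟩ : g ∣ a := Nat.gcd_dvd_left a b
  obtain ⟨b', hb'⟩ : g ∣ b := Nat.gcd_dvd_right a b
  have e1 : a / g = a' := by rw [ha', Nat.mul_div_cancel_left _ hg]
  have e2 : b / g = b' := by rw [hb', Nat.mul_div_cancel_left _ hg]
  rw [e1, e2]
  refine ⟨c, Nat.eq_of_mul_eq_mul_left hg ?_⟩
  calc g * (j * b') = j * (g * b') := by ring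
    _ = (g * a') * c := by rw [← hb', ← ha']; exact hc
    _ = g * (a' * c) := by ring

private lemma key_bound' {p q k k' B : ℕ} (hp : 0 < p)
    (hk' : IsLeast {j : ℕ | 0 < j ∧ 2 * p ∣ j * (q * (p - 2))} k')
    (hdvd : k' ∣ k) (hk : 0 < k)
    (hB : Nat.gcd (2 * p) (q * (p - 2)) ∣ B) (hBp : 0 < B) :
    2 * p / B ≤ k := by
  obtain ⟨⟨hk'pos, hk'dvd⟩, -⟩ := hk'
  have hgpos : 0 < Nat.gcd (2 * p) (q * (p - 2)) :=
    Nat.gcd_pos_of_pos_left _ (by omega)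
  have h1 : 2 * p / Nat.gcd (2 * p) (q * (p - 2)) ∣ k' := div_gcd_dvd' (by omega) hk'dvd
  have h2 : 2 * p / B ≤ 2 * p / Nat.gcd (2 * p) (q * (p - 2)) :=
    Nat.div_le_div_left (Nat.le_of_dvd hBp hB) hgpos
  have h3 : 2 * p / Nat.gcd (2 * p) (q * (p - 2)) ≤ k' := Nat.le_of_dvd hk'pos h1
  have h4 : k' ≤ k := Nat.le_of_dvd hk hdvd
  omega

private lemma odd_dvd_cancel' {d a : ℕ} (hodd : ¬ 2 ∣ d) (h : d ∣ 2 * a) : d ∣ a := by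
  have hco : Nat.Coprime d 2 := by
    have h1 : Nat.gcd d 2 ∣ 2 := Nat.gcd_dvd_right d 2
    have h2 : Nat.gcd d 2 ∣ d := Nat.gcd_dvd_left d 2
    rcases (Nat.dvd_prime Nat.prime_two).mp h1 with h' | h'
    · exact h'
    · exact absurd (h' ▸ h2) hodd
  exact hco.dvd_of_dvd_mul_left h

private lemma coprime_pred' {a : ℕ} (ha : 1 ≤ a) : Nat.gcd a (a - 1) = 1 := by
  have h1 : Nat.gcd a (a - 1) ∣ a := Nat.gcd_dvd_left _ _
  have h2 : Nat.gcd a (a - 1) ∣ a - 1 := Nat.gcd_dvd_right _ _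
  have h3 : Nat.gcd a (a - 1) ∣ a - (a - 1) := Nat.dvd_sub h1 h2
  have : a - (a - 1) = 1 := by omega
  rw [this] at h3
  exact Nat.eq_one_of_dvd_one h3

theorem stmt_19 (p q m k k' : ℕ) (hp : 3 ≤ p) (hq : 3 ≤ q) (hm : 1 ≤ m)
    (hk : 0 < k)
    (hk' : IsLeast {j : ℕ | 0 < j ∧ 2 * p ∣ j * (q * (p - 2))} k')
    (hdvd : k' ∣ k) :
    (Odd p → Odd q → m * k / 2 ≥ m * p / Nat.gcd p q) ∧
    (Even p → (Even q ∨ 4 ∣ p) → m * k ≥ m * p / Nat.gcd p q) ∧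
    (p % 4 = 2 → Odd q → m * k ≥ m * p / (2 * Nat.gcd p q)) := by
  set d := Nat.gcd p q with hd
  have hdp : d ∣ p := Nat.gcd_dvd_left p q
  have hdq : d ∣ q := Nat.gcd_dvd_right p q
  have hdpos : 0 < d := Nat.gcd_pos_of_pos_left q (by omega)
  refine ⟨?_, ?_, ?_⟩
  · -- p odd, q odd
    intro hpo hqo
    have hp2 : p % 2 = 1 := Nat.odd_iff.mp hpo
    have hq2 : q % 2 = 1 := Nat.odd_iff.mp hqo
    set g := Nat.gcd (2 * p) (q * (p - 2)) with hg
    have hgQ : g ∣ q * (p - 2) := Nat.gcd_dvd_right _ _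
    have hg2p : g ∣ 2 * p := Nat.gcd_dvd_left _ _
    have hgodd : ¬ 2 ∣ g := by
      intro h2
      have : 2 ∣ q * (p - 2) := h2.trans hgQ
      rcases (Nat.Prime.dvd_mul Nat.prime_two).mp this with h | h
      · omega
      · omega
    have hgp : g ∣ p := odd_dvd_cancel' hgodd hg2p
    have hcp : Nat.Coprime p (p - 2) := by
      have h1 : Nat.gcd p (p - 2) ∣ p := Nat.gcd_dvd_left _ _
      have h2 : Nat.gcd p (p - 2) ∣ p - 2 := Nat.gcd_dvd_right _ _
      have h3 : Nat.gcd p (p - 2) ∣ p - (p - 2) := Nat.dvd_sub h1 h2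
      have he : p - (p - 2) = 2 := by omega
      rw [he] at h3
      rcases (Nat.dvd_prime Nat.prime_two).mp h3 with h' | h'
      · exact h'
      · exfalso; have := h' ▸ h1; omega
    have hgcop : Nat.Coprime g (p - 2) := Nat.Coprime.coprime_dvd_left hgp hcp
    have hgq : g ∣ q := hgcop.dvd_of_dvd_mul_right hgQ
    have hgd : g ∣ d := Nat.dvd_gcd hgp hgq
    have hkey : 2 * p / d ≤ k := key_bound' (by omega) hk' hdvd hk hgd hdpos
    rw [Nat.mul_div_assoc 2 hdp] at hkey
    rw [Nat.mul_div_assoc m hdp, ge_iff_le, Nat.le_div_iff_mul_le (by norm_num)]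
    calc m * (p / d) * 2 = m * (2 * (p / d)) := by ring
      _ ≤ m * k := Nat.mul_le_mul_left m hkey
  · -- p even
    intro hpe hcase
    have hp2 : p % 2 = 0 := Nat.even_iff.mp hpe
    obtain ⟨a, ha⟩ : ∃ a, p = 2 * a := ⟨p / 2, by omega⟩
    have ha2 : 2 ≤ a := by omega
    have hsub : q * (p - 2) = 2 * (q * (a - 1)) := by
      have : p - 2 = 2 * (a - 1) := by omega
      rw [this]; ring
    have hgeq : Nat.gcd (2 * p) (q * (p - 2)) = 2 * Nat.gcd (2 * a) (q * (a - 1)) := by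
      rw [hsub, ha]
      rw [show 2 * (2 * a) = 2 * (2 * a) from rfl, Nat.gcd_mul_left]
    have hinner : Nat.gcd (2 * a) (q * (a - 1)) ∣ d := by
      rcases hcase with hqe | h4p
      · -- q even
        have hq2 : q % 2 = 0 := Nat.even_iff.mp hqe
        obtain ⟨b, hb⟩ : ∃ b, q = 2 * b := ⟨q / 2, by omega⟩
        have e1 : q * (a - 1) = 2 * (b * (a - 1)) := by rw [hb]; ring
        rw [e1, Nat.gcd_mul_left]
        have h1 : Nat.gcd a (b * (a - 1)) ∣ Nat.gcd a b * Nat.gcd a (a - 1) :=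
          Nat.gcd_mul_right_dvd_mul_gcd a b (a - 1)
        rw [coprime_pred' (by omega), mul_one] at h1
        have hd2 : d = 2 * Nat.gcd a b := by rw [hd, ha, hb, Nat.gcd_mul_left]
        rw [hd2]
        exact mul_dvd_mul_left 2 h1
      · -- 4 ∣ p, so a even, a - 1 odd
        have haeven : a % 2 = 0 := by omega
        have h1 : Nat.gcd (2 * a) (q * (a - 1)) ∣ Nat.gcd (2 * a) q * Nat.gcd (2 * a) (a - 1) :=
          Nat.gcd_mul_right_dvd_mul_gcd (2 * a) q (a - 1)
        have h2 : Nat.gcd (2 * a) (a - 1) = 1 := by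
          set c := Nat.gcd (2 * a) (a - 1) with hc
          have hc1 : c ∣ 2 * a := Nat.gcd_dvd_left _ _
          have hc2 : c ∣ a - 1 := Nat.gcd_dvd_right _ _
          have hcodd : ¬ 2 ∣ c := by
            intro h2'
            have : 2 ∣ a - 1 := h2'.trans hc2
            omega
          have hc3 : c ∣ a := odd_dvd_cancel' hcodd hc1
          have hc4 : c ∣ a - (a - 1) := Nat.dvd_sub hc3 hc2
          have : a - (a - 1) = 1 := by omega
          rw [this] at hc4
          exact Nat.eq_one_of_dvd_one hc4
        rw [h2, mul_one] at h1
        have : Nat.gcd (2 * a) q = d := by rw [hd, ha]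
        rwa [this] at h1
    have hB : Nat.gcd (2 * p) (q * (p - 2)) ∣ 2 * d := by
      rw [hgeq]; exact mul_dvd_mul_left 2 hinner
    have hkey : 2 * p / (2 * d) ≤ k := key_bound' (by omega) hk' hdvd hk hB (by omega)
    rw [Nat.mul_div_mul_left p d (by norm_num)] at hkey
    rw [ge_iff_le, Nat.mul_div_assoc m hdp]
    exact Nat.mul_le_mul_left m hkey
  · -- p ≡ 2 mod 4, q odd
    intro hp4 hqo
    have hq2 : q % 2 = 1 := Nat.odd_iff.mp hqo
    obtain ⟨a, ha⟩ : ∃ a, p = 2 * a := ⟨p / 2, by omega⟩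
    have ha2 : 2 ≤ a := by omega
    have hsub : q * (p - 2) = 2 * (q * (a - 1)) := by
      have : p - 2 = 2 * (a - 1) := by omega
      rw [this]; ring
    have hgeq : Nat.gcd (2 * p) (q * (p - 2)) = 2 * Nat.gcd (2 * a) (q * (a - 1)) := by
      rw [hsub, ha, Nat.gcd_mul_left]
    have h1 : Nat.gcd (2 * a) (q * (a - 1)) ∣ Nat.gcd (2 * a) q * Nat.gcd (2 * a) (a - 1) :=
      Nat.gcd_mul_right_dvd_mul_gcd (2 * a) q (a - 1)
    have hdq' : Nat.gcd (2 * a) q = d := by rw [hd, ha]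
    have h2 : Nat.gcd (2 * a) (a - 1) ∣ 2 := by
      have hc1 : Nat.gcd (2 * a) (a - 1) ∣ 2 * a := Nat.gcd_dvd_left _ _
      have hc2 : Nat.gcd (2 * a) (a - 1) ∣ 2 * (a - 1) := (Nat.gcd_dvd_right _ _).mul_left 2
      have hc3 : Nat.gcd (2 * a) (a - 1) ∣ 2 * a - 2 * (a - 1) := Nat.dvd_sub hc1 hc2
      have : 2 * a - 2 * (a - 1) = 2 := by omega
      rwa [this] at hc3
    have hinner : Nat.gcd (2 * a) (q * (a - 1)) ∣ d * 2 := by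
      refine h1.trans ?_
      rw [hdq']
      exact mul_dvd_mul_left d h2
    have hB : Nat.gcd (2 * p) (q * (p - 2)) ∣ 2 * (2 * d) := by
      rw [hgeq]
      have : d * 2 = 2 * d := by ring
      rw [this] at hinner
      exact mul_dvd_mul_left 2 hinner
    have hkey : 2 * p / (2 * (2 * d)) ≤ k := key_bound' (by omega) hk' hdvd hk hB (by omega)
    rw [Nat.mul_div_mul_left p (2 * d) (by norm_num)] at hkey
    -- need 2 * d ∣ p
    have hdodd : ¬ 2 ∣ d := by
      intro h2'
      have : 2 ∣ q := h2'.trans hdq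
      omega
    have hda : d ∣ a := odd_dvd_cancel' hdodd (ha ▸ hdp)
    have h2dp : 2 * d ∣ p := by
      rw [ha]
      exact mul_dvd_mul_left 2 hda
    rw [ge_iff_le, Nat.mul_div_assoc m h2dp]
    exact Nat.mul_le_mul_left m hkey
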